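/- For every mixed polynomial f : ℂⁿ → ℂ, the set f(Sing f) ∪ S(f) is a closed subset of ℂ. -/

import Mathlib

open Complex Filter Finset

noncomputable section

abbrev MixedCoeff (n : ℕ) := ((Fin n → ℕ) × (Fin n → ℕ)) →₀ ℂ

namespace Mixed

variable {n : ℕ}

/-- Evaluation of a mixed polynomial given by its coefficient function `c`:
`f(z) = Σ c(ν,μ) zᵛ z̄ᵘ`. -/
def eval (c : MixedCoeff n) (z : Fin n → ℂ) : ℂ :=
  c.sum fun p a => a * (∏ i, z i ^ p.1 i) * ∏ i, (starRingEnd ℂ) (z i) ^ p.2 i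

/-- `∂f/∂z_i` evaluated at `(z, z̄)`. -/
def dz (c : MixedCoeff n) (i : Fin n) (z : Fin n → ℂ) : ℂ :=
  c.sum fun p a => a * (p.1 i) * (∏ j, z j ^ (p.1 j - if j = i then 1 else 0)) *
    ∏ j, (starRingEnd ℂ) (z j) ^ p.2 j

/-- `∂f/∂z̄_i` evaluated at `(z, z̄)`. -/
def dzbar (c : MixedCoeff n) (i : Fin n) (z : Fin n → ℂ) : ℂ :=
  c.sum fun p a => a * (p.2 i) * (∏ j, z j ^ p.1 j) *
    ∏ j, (starRingEnd ℂ) (z j) ^ (p.2 j - if j = i then 1 else 0)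

/-- The singular locus of `f` as a real map `ℝ²ⁿ → ℝ²`. -/
def Sing (c : MixedCoeff n) : Set (Fin n → ℂ) :=
  {z | ¬ Function.Surjective ⇑(fderiv ℝ (eval c) z)}

/-- The Milnor set `M(f)`. -/
def Milnor (c : MixedCoeff n) : Set (Fin n → ℂ) :=
  {z | ∃ (l : ℝ) (m : ℂ), m ≠ 0 ∧
    ∀ i, (l : ℂ) * z i = m * (starRingEnd ℂ) (dz c i z) + (starRingEnd ℂ) m * dzbar c i z}

/-- The set `S(f)` of asymptotic ρ-nonregular values. -/
def Sset (c : MixedCoeff n) : Set ℂ :=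
  {v | ∃ zk : ℕ → (Fin n → ℂ), (∀ k, zk k ∈ Milnor c) ∧
    Tendsto (fun k => ‖zk k‖) atTop atTop ∧
    Tendsto (fun k => eval c (zk k)) atTop (nhds v)}

/-- The point of `ℝⁿ` attached to the exponent pair `(ν,μ)`, namely `ν+μ`. -/
def suppPt (p : (Fin n → ℕ) × (Fin n → ℕ)) : Fin n → ℝ := fun i => ((p.1 i + p.2 i : ℕ) : ℝ)

/-- The support of `f`, as a subset of `ℝⁿ`. -/
def suppPts (c : MixedCoeff n) : Set (Fin n → ℝ) := suppPt '' (c.support : Set _)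

/-- The Newton polyhedron `Γ₀(f)`: convex hull of `{0} ∪ supp(f)`. -/
def Gamma0 (c : MixedCoeff n) : Set (Fin n → ℝ) := convexHull ℝ (insert 0 (suppPts c))

/-- `supp(f)‾`: the convex hull of `supp(f) \ {0}`. -/
def suppBar (c : MixedCoeff n) : Set (Fin n → ℝ) := convexHull ℝ (suppPts c \ {0})

/-- `F` is a face of the (compact convex) set `C`: either `C` itself or the set of
minimizers on `C` of a linear functional, and nonempty. -/
def IsFaceOf (C F : Set (Fin n → ℝ)) : Prop :=
  F.Nonempty ∧ (F = C ∨ ∃ a : Fin n → ℝ,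
    F = {x ∈ C | ∀ y ∈ C, ∑ i, a i * x i ≤ ∑ i, a i * y i})

/-- `Δ` is a face of the Newton boundary at infinity `Γ⁺(f)`: a face of `Γ₀(f)` not
containing the origin. -/
def IsGammaPlusFace (c : MixedCoeff n) (Δ : Set (Fin n → ℝ)) : Prop :=
  IsFaceOf (Gamma0 c) Δ ∧ (0 : Fin n → ℝ) ∉ Δ

/-- `Γ⁺(f)` as a subset of `ℝⁿ`: the union of the faces of `Γ₀(f)` not containing `0`. -/
def GammaPlusSet (c : MixedCoeff n) : Set (Fin n → ℝ) :=
  {x | ∃ Δ, IsGammaPlusFace c Δ ∧ x ∈ Δ}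

/-- The truncation `f_Δ` of `f` to a subset `Δ ⊆ ℝⁿ`. -/
def trunc (c : MixedCoeff n) (Δ : Set (Fin n → ℝ)) : MixedCoeff n :=
  @Finsupp.filter _ _ _ (fun p => suppPt p ∈ Δ) (Classical.decPred _) c

/-- Newton non-degeneracy: for every face `Δ` of `Γ⁺(f)`,
`Sing f_Δ ∩ f_Δ⁻¹(0) ∩ (ℂ*)ⁿ = ∅`. -/
def NewtonNonDeg (c : MixedCoeff n) : Prop :=
  ∀ Δ, IsGammaPlusFace c Δ → ∀ z : Fin n → ℂ, (∀ i, z i ≠ 0) →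
    eval (trunc c Δ) z = 0 → z ∉ Sing (trunc c Δ)

/-- Newton strong non-degeneracy: for every face `Δ` of `Γ⁺(f)`,
`Sing f_Δ ∩ (ℂ*)ⁿ = ∅`. -/
def NewtonStronglyNonDeg (c : MixedCoeff n) : Prop :=
  ∀ Δ, IsGammaPlusFace c Δ → ∀ z : Fin n → ℂ, (∀ i, z i ≠ 0) →
    z ∉ Sing (trunc c Δ)

/-- `Δ` is a bad face of `supp(f)‾`. -/
def IsBadFace (c : MixedCoeff n) (Δ : Set (Fin n → ℝ)) : Prop :=
  IsFaceOf (suppBar c) Δ ∧ (0 : Fin n → ℝ) ∈ affineSpan ℝ Δ ∧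
    ∃ a : Fin n → ℝ, (∃ i, a i < 0) ∧ (∃ j, 0 < a j) ∧
      {x ∈ suppBar c | ∑ i, a i * x i = 0} = Δ

/-- `f` depends effectively on all its variables. -/
def EffectiveAll (c : MixedCoeff n) : Prop :=
  ∀ i, ∃ p ∈ c.support, 0 < p.1 i + p.2 i

/-- The Euclidean norm on `ℂⁿ`. -/
def norm2 (v : Fin n → ℂ) : ℝ := Real.sqrt (∑ i, Complex.normSq (v i))

end Mixed

namespace MixedAux

open Mixed

variable {n : ℕ}

/-- `v ↦ ∑ i, A i * v i + B i * conj (v i)` as a continuous real-linear map. -/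
def lmap (A B : Fin n → ℂ) : (Fin n → ℂ) →L[ℝ] ℂ :=
  LinearMap.toContinuousLinearMap
  { toFun := fun v => ∑ i, (A i * v i + B i * (starRingEnd ℂ) (v i))
    map_add' := fun v w => by
      simp only [Pi.add_apply, map_add, mul_add, ← Finset.sum_add_distrib]
      exact Finset.sum_congr rfl fun i _ => by ring
    map_smul' := fun r v => by
      simp only [Pi.smul_apply, Complex.real_smul, map_mul, Complex.conj_ofReal,
        RingHom.id_apply, Finset.mul_sum]
      exact Finset.sum_congr rfl fun i _ => by ring }

lemma lmap_apply (A B : Fin n → ℂ) (v : Fin n → ℂ) :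
    lmap A B v = ∑ i, (A i * v i + B i * (starRingEnd ℂ) (v i)) := rfl

lemma lmap_single (A B : Fin n → ℂ) (i : Fin n) (t : ℂ) :
    lmap A B (Pi.single i t) = A i * t + B i * (starRingEnd ℂ) t := by
  rw [lmap_apply, Finset.sum_eq_single i]
  · simp
  · intro j _ hj; simp [Pi.single_eq_of_ne hj]
  · simp

lemma lmap_sum {s : Finset (((Fin n → ℕ) × (Fin n → ℕ)))}
    (A B : ((Fin n → ℕ) × (Fin n → ℕ)) → Fin n → ℂ) :
    ∑ p ∈ s, lmap (A p) (B p)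
      = lmap (fun i => ∑ p ∈ s, A p i) (fun i => ∑ p ∈ s, B p i) := by
  ext v
  simp only [ContinuousLinearMap.coe_sum', Finset.sum_apply, lmap_apply, Finset.sum_mul]
  rw [Finset.sum_comm]
  exact Finset.sum_congr rfl fun i _ => by
    rw [Finset.sum_add_distrib]

lemma continuous_conj' : Continuous fun z : ℂ => (starRingEnd ℂ) z := continuous_star

lemma span_id (x w : ℂ) :
    (((starRingEnd ℂ x * w).re : ℂ)) * x + (((starRingEnd ℂ (I*x) * w).re : ℂ)) * (I*x)
      = (Complex.normSq x : ℂ) * w := by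
  simp only [Complex.ext_iff, Complex.add_re, Complex.add_im, Complex.mul_re, Complex.mul_im,
    Complex.ofReal_re, Complex.ofReal_im, Complex.conj_re, Complex.conj_im, Complex.I_re,
    Complex.I_im, Complex.normSq_apply]
  constructor <;> ring

lemma exists_perp_of_not_surjective (L : (Fin n → ℂ) →L[ℝ] ℂ)
    (h : ¬ Function.Surjective L) :
    ∃ μ : ℂ, μ ≠ 0 ∧ ∀ v, ((starRingEnd ℂ) μ * L v).re = 0 := by
  by_cases h0 : ∀ v, L v = 0
  · exact ⟨1, one_ne_zero, fun v => by simp [h0 v]⟩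
  push_neg at h0
  obtain ⟨v0, hv0⟩ := h0
  set x := L v0 with hx
  refine ⟨I * x, by simp [hv0], ?_⟩
  by_contra hcon
  push_neg at hcon
  obtain ⟨v1, hv1⟩ := hcon
  apply h
  intro w
  set y := L v1 with hy
  set r : ℝ := ((starRingEnd ℂ) (I*x) * y).re with hrdef
  set s : ℝ := ((starRingEnd ℂ) x * y).re with hsdef
  set p : ℝ := ((starRingEnd ℂ) x * w).re with hpdef
  set q : ℝ := ((starRingEnd ℂ) (I*x) * w).re with hqdef
  have hN : (Complex.normSq x : ℂ) ≠ 0 := by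
    exact Complex.ofReal_ne_zero.mpr (ne_of_gt (Complex.normSq_pos.mpr hv0))
  have hrC : (r : ℂ) ≠ 0 := Complex.ofReal_ne_zero.mpr hv1
  refine ⟨((p - q*s/r)/Complex.normSq x) • v0 + (q/r) • v1, ?_⟩
  rw [map_add, map_smul, map_smul, ← hx, ← hy]
  have id1 := span_id x w
  have id2 := span_id x y
  rw [Complex.real_smul, Complex.real_smul]
  push_cast
  field_simp
  linear_combination (r : ℂ) * id1 - (q : ℂ) * id2

lemma not_surjective_of_perp (L : (Fin n → ℂ) →L[ℝ] ℂ) (μ : ℂ) (hμ : μ ≠ 0)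
    (h : ∀ v, ((starRingEnd ℂ) μ * L v).re = 0) : ¬ Function.Surjective L := by
  intro hs
  obtain ⟨v, hv⟩ := hs μ
  have h2 := h v
  rw [hv] at h2
  simp only [Complex.mul_re, Complex.conj_re, Complex.conj_im] at h2
  exact hμ (by
    have h3 : Complex.normSq μ = 0 := by simp [Complex.normSq_apply]; linarith
    exact Complex.normSq_eq_zero.mp h3)

lemma prod_pow_sub (w : Fin n → ℂ) (ν : Fin n → ℕ) (i : Fin n) :
    ((ν i : ℂ)) * ∏ j, w j ^ (ν j - if j = i then 1 else 0)
      = (ν i : ℂ) * (w i ^ (ν i - 1) * ∏ j ∈ univ.erase i, w j ^ ν j) := by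
  rcases Nat.eq_zero_or_pos (ν i) with h | h
  · simp [h]
  · congr 1
    rw [← Finset.mul_prod_erase univ _ (mem_univ i), if_pos rfl]
    congr 1
    exact Finset.prod_congr rfl fun j hj => by
      rw [if_neg (Finset.ne_of_mem_erase hj), Nat.sub_zero]

lemma hasFDerivAt_monomial (a : ℂ) (ν μ : Fin n → ℕ) (z : Fin n → ℂ) :
    HasFDerivAt (fun z : Fin n → ℂ =>
        a * (∏ i, z i ^ ν i) * ∏ i, (starRingEnd ℂ) (z i) ^ μ i)
      (lmap
        (fun i => a * (ν i) * (∏ j, z j ^ (ν j - if j = i then 1 else 0)) *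
          ∏ j, (starRingEnd ℂ) (z j) ^ μ j)
        (fun i => a * (μ i) * (∏ j, z j ^ ν j) *
          ∏ j, (starRingEnd ℂ) (z j) ^ (μ j - if j = i then 1 else 0))) z := by
  have hg : ∀ i ∈ (univ : Finset (Fin n)), HasFDerivAt (fun z : Fin n → ℂ => z i ^ ν i)
      ((((1 : ℂ →L[ℂ] ℂ).smulRight ((ν i : ℂ) * z i ^ (ν i - 1))).restrictScalars ℝ).comp
        (ContinuousLinearMap.proj (R := ℝ) (φ := fun _ : Fin n => ℂ) i)) z := by
    intro i _
    exact HasFDerivAt.comp z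
      (((hasDerivAt_pow (ν i) (z i)).hasFDerivAt).restrictScalars ℝ)
      ((ContinuousLinearMap.proj (R := ℝ) (φ := fun _ : Fin n => ℂ) i).hasFDerivAt)
  have hh : ∀ i ∈ (univ : Finset (Fin n)),
      HasFDerivAt (fun z : Fin n → ℂ => (starRingEnd ℂ) (z i) ^ μ i)
      ((((1 : ℂ →L[ℂ] ℂ).smulRight ((μ i : ℂ) * (starRingEnd ℂ) (z i) ^ (μ i - 1))).restrictScalars
          ℝ).comp ((Complex.conjCLE.toContinuousLinearMap).comp
          (ContinuousLinearMap.proj (R := ℝ) (φ := fun _ : Fin n => ℂ) i))) z := by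
    intro i _
    exact HasFDerivAt.comp z
      (((hasDerivAt_pow (μ i) ((starRingEnd ℂ) (z i))).hasFDerivAt).restrictScalars ℝ)
      ((Complex.conjCLE.toContinuousLinearMap).comp
          (ContinuousLinearMap.proj (R := ℝ) (φ := fun _ : Fin n => ℂ) i)).hasFDerivAt
  have hP := HasFDerivAt.finset_prod hg
  have hQ := HasFDerivAt.finset_prod hh
  have hfull := (hP.mul hQ).const_mul a
  simp only [mul_assoc]
  refine hfull.congr_fderiv ?_
  ext v
  simp only [lmap_apply, ContinuousLinearMap.smul_apply, ContinuousLinearMap.add_apply,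
    ContinuousLinearMap.coe_sum', Finset.sum_apply, ContinuousLinearMap.coe_smul',
    Pi.smul_apply, ContinuousLinearMap.proj_apply, ContinuousLinearMap.coe_comp',
    Function.comp_apply, ContinuousLinearEquiv.coe_coe, Complex.conjCLE_apply,
    smul_eq_mul]
  simp only [ContinuousLinearMap.coe_restrictScalars', ContinuousLinearMap.smulRight_apply,
    ContinuousLinearMap.one_apply, smul_eq_mul, mul_add, Finset.mul_sum]
  rw [← Finset.sum_add_distrib]
  refine Finset.sum_congr rfl fun i _ => ?_
  have e1 := prod_pow_sub z ν i
  have e2 := prod_pow_sub (fun j => (starRingEnd ℂ) (z j)) μ i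
  linear_combination (-(a * v i * (∏ j, (starRingEnd ℂ) (z j) ^ μ j))) * e1 -
    (a * (starRingEnd ℂ) (v i) * (∏ j, z j ^ ν j)) * e2

lemma hasFDerivAt_eval (c : MixedCoeff n) (z : Fin n → ℂ) :
    HasFDerivAt (Mixed.eval c)
      (lmap (fun i => Mixed.dz c i z) (fun i => Mixed.dzbar c i z)) z := by
  have h := HasFDerivAt.fun_sum (u := c.support)
    (fun p _ => hasFDerivAt_monomial (c p) p.1 p.2 z)
  rw [lmap_sum] at h
  exact h

lemma continuous_dz (c : MixedCoeff n) (i : Fin n) : Continuous (Mixed.dz c i) := by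
  unfold Mixed.dz Finsupp.sum
  refine continuous_finset_sum _ fun p _ => ?_
  exact (continuous_const.mul
      (continuous_finset_prod _ fun j _ => (continuous_apply j).pow _)).mul
    (continuous_finset_prod _ fun j _ => (continuous_conj'.comp (continuous_apply j)).pow _)

lemma continuous_dzbar (c : MixedCoeff n) (i : Fin n) : Continuous (Mixed.dzbar c i) := by
  unfold Mixed.dzbar Finsupp.sum
  refine continuous_finset_sum _ fun p _ => ?_
  exact (continuous_const.mul
      (continuous_finset_prod _ fun j _ => (continuous_apply j).pow _)).mul
    (continuous_finset_prod _ fun j _ => (continuous_conj'.comp (continuous_apply j)).pow _)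

lemma continuous_eval (c : MixedCoeff n) : Continuous (Mixed.eval c) :=
  continuous_iff_continuousAt.mpr fun z => (hasFDerivAt_eval c z).continuousAt

lemma mem_sing_iff (c : MixedCoeff n) (z : Fin n → ℂ) :
    z ∈ Mixed.Sing c ↔ ∃ m : ℂ, m ≠ 0 ∧ ∀ i,
      m * (starRingEnd ℂ) (Mixed.dz c i z) + (starRingEnd ℂ) m * Mixed.dzbar c i z = 0 := by
  have hF : fderiv ℝ (Mixed.eval c) z
      = lmap (fun i => Mixed.dz c i z) (fun i => Mixed.dzbar c i z) :=
    (hasFDerivAt_eval c z).fderiv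
  rw [Mixed.Sing, Set.mem_setOf_eq, hF]
  constructor
  · intro h
    obtain ⟨μ, hμ, hperp⟩ := exists_perp_of_not_surjective _ h
    refine ⟨μ, hμ, fun i => ?_⟩
    have h1 := hperp (Pi.single i 1)
    have h2 := hperp (Pi.single i I)
    rw [lmap_single] at h1 h2
    simp only [map_one, mul_one, Complex.conj_I, mul_neg] at h1 h2
    rw [Complex.ext_iff]
    constructor <;>
    · simp only [Complex.add_re, Complex.add_im, Complex.mul_re, Complex.mul_im, Complex.sub_re,
        Complex.sub_im, Complex.neg_re, Complex.neg_im, Complex.conj_re, Complex.conj_im,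
        Complex.I_re, Complex.I_im, Complex.zero_re, Complex.zero_im, mul_zero, mul_one,
        zero_mul, one_mul, zero_sub, sub_zero, neg_neg, zero_add, add_zero] at h1 h2 ⊢
      linarith
  · rintro ⟨m, hm, heq⟩
    apply not_surjective_of_perp _ m hm
    intro v
    rw [lmap_apply, Finset.mul_sum, Complex.re_sum]
    refine Finset.sum_eq_zero fun i _ => ?_
    have h := heq i
    have key : (starRingEnd ℂ) m *
        (Mixed.dz c i z * v i + Mixed.dzbar c i z * (starRingEnd ℂ) (v i))
        = (starRingEnd ℂ) m * Mixed.dz c i z * v i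
          - m * (starRingEnd ℂ) (Mixed.dz c i z) * (starRingEnd ℂ) (v i) := by
      linear_combination (starRingEnd ℂ) (v i) * h
    rw [key]
    have h2 : m * (starRingEnd ℂ) (Mixed.dz c i z) * (starRingEnd ℂ) (v i)
        = (starRingEnd ℂ) ((starRingEnd ℂ) m * Mixed.dz c i z * v i) := by
      simp only [map_mul, Complex.conj_conj]
    rw [h2, Complex.sub_re, Complex.conj_re, sub_self]

lemma sing_subset_milnor (c : MixedCoeff n) : Mixed.Sing c ⊆ Mixed.Milnor c := fun z hz => by
  obtain ⟨m, hm, h⟩ := (mem_sing_iff c z).mp hz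
  exact ⟨0, m, hm, fun i => by rw [Complex.ofReal_zero, zero_mul, h i]⟩

lemma isClosed_sing (c : MixedCoeff n) : IsClosed (Mixed.Sing c) := by
  have hset : Mixed.Sing c = {z | ∃ m : ℂ, ‖m‖ = 1 ∧ ∀ i,
      m * (starRingEnd ℂ) (Mixed.dz c i z) + (starRingEnd ℂ) m * Mixed.dzbar c i z = 0} := by
    ext z
    rw [mem_sing_iff, Set.mem_setOf_eq]
    constructor
    · rintro ⟨m, hm, h⟩
      refine ⟨(‖m‖⁻¹ : ℝ) • m, ?_, fun i => ?_⟩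
      · rw [norm_smul, norm_inv, norm_norm, inv_mul_cancel₀ (norm_ne_zero_iff.mpr hm)]
      · simp only [Complex.real_smul, map_mul, Complex.conj_ofReal]
        linear_combination ((‖m‖⁻¹ : ℝ) : ℂ) * h i
    · rintro ⟨m, hm, h⟩
      exact ⟨m, fun h0 => by simp [h0] at hm, h⟩
  rw [hset]
  apply IsSeqClosed.isClosed
  intro u z hu huz
  choose m hm1 hmeq using hu
  have hmem : ∀ k, m k ∈ Metric.sphere (0 : ℂ) 1 := fun k => by
    simp [Metric.mem_sphere, dist_zero_right, hm1 k]
  obtain ⟨m0, hm0mem, φ, hφ, hconv⟩ := (isCompact_sphere (0 : ℂ) 1).tendsto_subseq hmem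
  have hm0 : ‖m0‖ = 1 := by simpa [Metric.mem_sphere, dist_zero_right] using hm0mem
  refine ⟨m0, hm0, fun i => ?_⟩
  have h1 : Tendsto (fun k => m (φ k) * (starRingEnd ℂ) (Mixed.dz c i (u (φ k)))
        + (starRingEnd ℂ) (m (φ k)) * Mixed.dzbar c i (u (φ k))) atTop
      (nhds (m0 * (starRingEnd ℂ) (Mixed.dz c i z) + (starRingEnd ℂ) m0 * Mixed.dzbar c i z)) := by
    have hz : Tendsto (fun k => u (φ k)) atTop (nhds z) := huz.comp hφ.tendsto_atTop
    exact (hconv.mul (((continuous_conj'.tendsto _).comp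
        (((continuous_dz c i).tendsto z).comp hz)))).add
      (((continuous_conj'.tendsto _).comp hconv).mul
        (((continuous_dzbar c i).tendsto z).comp hz))
  have h1' : Tendsto (fun _ : ℕ => (0 : ℂ)) atTop
      (nhds (m0 * (starRingEnd ℂ) (Mixed.dz c i z) + (starRingEnd ℂ) m0 * Mixed.dzbar c i z)) :=
    h1.congr fun k => hmeq (φ k) i
  exact (tendsto_nhds_unique h1' tendsto_const_nhds)

end MixedAux


/-- `f(Sing f) ∪ S(f)` is closed. -/
theorem image_sing_union_Sset_isClosed {n : ℕ} (c : MixedCoeff n) :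
    IsClosed (Mixed.eval c '' Mixed.Sing c ∪ Mixed.Sset c) := by
  apply IsSeqClosed.isClosed
  intro u v hu huv
  by_cases hA : ∃ᶠ k in atTop, u k ∈ Mixed.eval c '' Mixed.Sing c
  · obtain ⟨φ, hφ, hφmem⟩ := Filter.extraction_of_frequently_atTop hA
    choose zk hzk hfzk using hφmem
    by_cases hb : ∃ M : ℝ, ∃ᶠ k in atTop, ‖zk k‖ ≤ M
    · obtain ⟨M, hM⟩ := hb
      obtain ⟨ψ, hψ, hψle⟩ := Filter.extraction_of_frequently_atTop hM
      have hball : ∀ k, zk (ψ k) ∈ Metric.closedBall (0 : Fin n → ℂ) M := fun k => by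
        simpa [Metric.mem_closedBall, dist_zero_right] using hψle k
      obtain ⟨z0, _, χ, hχ, hχconv⟩ :=
        (isCompact_closedBall (0 : Fin n → ℂ) M).tendsto_subseq hball
      left
      refine ⟨z0, (MixedAux.isClosed_sing c).isSeqClosed
        (fun k => hzk (ψ (χ k))) hχconv, ?_⟩
      have h1 : Tendsto (fun k => Mixed.eval c (zk (ψ (χ k)))) atTop (nhds (Mixed.eval c z0)) :=
        ((MixedAux.continuous_eval c).tendsto z0).comp hχconv
      have h2 : Tendsto (fun k => Mixed.eval c (zk (ψ (χ k)))) atTop (nhds v) := by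
        have he : (fun k => Mixed.eval c (zk (ψ (χ k)))) = fun k => u (φ (ψ (χ k))) :=
          funext fun k => hfzk _
        rw [he]
        exact huv.comp ((hφ.comp (hψ.comp hχ)).tendsto_atTop)
      exact tendsto_nhds_unique h1 h2
    · push_neg at hb
      right
      refine ⟨zk, fun k => MixedAux.sing_subset_milnor c (hzk k), ?_, ?_⟩
      · rw [tendsto_atTop]
        intro b
        have := hb b
        exact this.mono fun k hk => le_of_lt hk
      · have he : (fun k => Mixed.eval c (zk k)) = fun k => u (φ k) := funext hfzk
        rw [he]
        exact huv.comp hφ.tendsto_atTop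
  · have hB : ∃ᶠ k in atTop, u k ∈ Mixed.Sset c := by
      rw [Filter.not_frequently] at hA
      refine (hA.mono ?_).frequently
      intro k hk
      rcases hu k with h | h
      · exact absurd h hk
      · exact h
    obtain ⟨φ, hφ, hφmem⟩ := Filter.extraction_of_frequently_atTop hB
    have hsel : ∀ k : ℕ, ∃ w : Fin n → ℂ, w ∈ Mixed.Milnor c ∧ (k : ℝ) ≤ ‖w‖ ∧
        dist (Mixed.eval c w) (u (φ k)) ≤ 1 / ((k : ℝ) + 1) := by
      intro k
      obtain ⟨zs, hzs, hnorm, hval⟩ := hφmem k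
      have h1 : ∀ᶠ j in atTop, (k : ℝ) ≤ ‖zs j‖ := hnorm.eventually_ge_atTop _
      have h2 : ∀ᶠ j in atTop, dist (Mixed.eval c (zs j)) (u (φ k)) ≤ 1 / ((k : ℝ) + 1) := by
        have := Metric.tendsto_nhds.mp hval (1 / ((k : ℝ) + 1)) (by positivity)
        exact this.mono fun j hj => le_of_lt hj
      obtain ⟨j, hj1, hj2⟩ := (h1.and h2).exists
      exact ⟨zs j, hzs j, hj1, hj2⟩
    choose w hw1 hw2 hw3 using hsel
    right
    refine ⟨w, hw1, ?_, ?_⟩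
    · exact tendsto_atTop_mono hw2 tendsto_natCast_atTop_atTop
    · have hu' : Tendsto (fun k => u (φ k)) atTop (nhds v) := huv.comp hφ.tendsto_atTop
      have hd : Tendsto (fun k => dist (u (φ k)) (Mixed.eval c (w k))) atTop (nhds 0) := by
        refine squeeze_zero (fun _ => dist_nonneg) (fun k => ?_)
          tendsto_one_div_add_atTop_nhds_zero_nat
        rw [dist_comm]
        exact hw3 k
      exact hu'.congr_dist hd
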